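/- Let f : X → X be an N-distal homeomorphism and g : Y → Y an M-distal homeomorphism on compact metric spaces X and Y. Then the product homeomorphism f × g : X × Y → X × Y, with the max metric d²((x₁,y₁),(x₂,y₂)) = max{d_X(x₁,x₂), d_Y(y₁,y₂)}, is MN-distal. -/

import Mathlib

open Set Metric

variable {X Y : Type*}

/-- The proximal cell of `x` for `f`: points `y` with `inf_n d(f^n x, f^n y) = 0`. -/
def proxCell [MetricSpace X] (f : Equiv.Perm X) (x : X) : Set X :=
  {y | ∀ ε > 0, ∃ n : ℤ, dist ((f ^ n) x) ((f ^ n) y) < ε}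

/-- `f` is `N`-distal if every proximal cell has at most `N` points. -/
def NDistal [MetricSpace X] (f : Equiv.Perm X) (N : ℕ) : Prop :=
  ∀ x : X, (proxCell f x).encard ≤ N

/-- Minimal pairwise distance of a set. -/
noncomputable def minDist [MetricSpace X] (B : Set X) : ℝ :=
  sInf {r | ∃ x ∈ B, ∃ y ∈ B, x ≠ y ∧ r = dist x y}

/-- The `N`-diameter of `A` (sup over subsets with `N+1` elements of the minimal
pairwise distance; `sSup ∅ = 0` in `ℝ`). -/
noncomputable def diamN [MetricSpace X] (N : ℕ) (A : Set X) : ℝ :=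
  sSup {r | ∃ B : Set X, B ⊆ A ∧ B.encard = N + 1 ∧ r = minDist B}

/-- `R_δ(x) = {y : d(f^i y, f^i x) < δ for some i ∈ ℤ}`. -/
def Rball [MetricSpace X] (f : Equiv.Perm X) (δ : ℝ) (x : X) : Set X :=
  {y | ∃ i : ℤ, dist ((f ^ i) y) ((f ^ i) x) < δ}

/-- The `δ`-dynamical ball `Γ_δ(x)`. -/
def dynBall [MetricSpace X] (f : Equiv.Perm X) (δ : ℝ) (x : X) : Set X :=
  {y | ∀ n : ℤ, dist ((f ^ n) x) ((f ^ n) y) < δ}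

lemma prodCongr_pow_apply [MetricSpace X] [MetricSpace Y] (f : Equiv.Perm X) (g : Equiv.Perm Y)
    (n : ℕ) (p : X × Y) :
    ((Equiv.prodCongr f g) ^ n) p = ((f ^ n) p.1, (g ^ n) p.2) := by
  induction n generalizing p with
  | zero => simp
  | succ n ih =>
    rw [pow_succ, pow_succ, pow_succ, Equiv.Perm.mul_apply, Equiv.Perm.mul_apply,
      Equiv.Perm.mul_apply, ih]
    rfl

lemma prodCongr_zpow_apply [MetricSpace X] [MetricSpace Y] (f : Equiv.Perm X) (g : Equiv.Perm Y)
    (n : ℤ) (p : X × Y) :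
    ((Equiv.prodCongr f g) ^ n) p = ((f ^ n) p.1, (g ^ n) p.2) := by
  cases n with
  | ofNat k => simpa using prodCongr_pow_apply f g k p
  | negSucc k =>
    rw [zpow_negSucc, zpow_negSucc, zpow_negSucc, Equiv.Perm.inv_def, Equiv.Perm.inv_def,
      Equiv.Perm.inv_def, Equiv.symm_apply_eq, prodCongr_pow_apply]
    simp

theorem stmt2 [MetricSpace X] [CompactSpace X] [MetricSpace Y] [CompactSpace Y]
    (f : Equiv.Perm X) (hf : Continuous f) (hf' : Continuous f.symm)
    (g : Equiv.Perm Y) (hg : Continuous g) (hg' : Continuous g.symm)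
    (N M : ℕ) (hN : 0 < N) (hM : 0 < M)
    (hfd : NDistal f N) (hgd : NDistal g M) :
    NDistal (Equiv.prodCongr f g) (M * N) := by
  intro p
  have hsub : proxCell (Equiv.prodCongr f g) p ⊆ (proxCell f p.1) ×ˢ (proxCell g p.2) := by
    rintro ⟨a, b⟩ hq
    constructor
    · intro ε hε
      obtain ⟨n, hn⟩ := hq ε hε
      rw [prodCongr_zpow_apply, prodCongr_zpow_apply] at hn
      exact ⟨n, lt_of_le_of_lt (le_max_left _ _) hn⟩
    · intro ε hε
      obtain ⟨n, hn⟩ := hq ε hε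
      rw [prodCongr_zpow_apply, prodCongr_zpow_apply] at hn
      exact ⟨n, lt_of_le_of_lt (le_max_right _ _) hn⟩
  have hx := hfd p.1
  have hy := hgd p.2
  have hxf : (proxCell f p.1).Finite := Set.finite_of_encard_le_coe hx
  have hyf : (proxCell g p.2).Finite := Set.finite_of_encard_le_coe hy
  calc (proxCell (Equiv.prodCongr f g) p).encard
      ≤ ((proxCell f p.1) ×ˢ (proxCell g p.2)).encard := Set.encard_mono hsub
    _ = (proxCell f p.1).encard * (proxCell g p.2).encard := by
        rw [hxf.encard_eq_coe_toFinset_card, hyf.encard_eq_coe_toFinset_card,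
          (hxf.prod hyf).encard_eq_coe_toFinset_card, ← Set.Finite.toFinset_prod,
          Finset.card_product]
        push_cast
        ring
        exact hxf
        exact hyf
    _ ≤ (N : ℕ∞) * (M : ℕ∞) := mul_le_mul' hx hy
    _ = ((M * N : ℕ) : ℕ∞) := by push_cast; ring
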